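/- arXiv:0707.0137 — 4 statements merged into one kernel-verified Lean document; each statement's English description precedes it below -/
import Mathlib

section
/- Let G be a group, E an equivalence relation on G, and X_E = {a⁻¹b : a, b ∈ G, E(a,b)}, with G_E the subgroup generated by X_E. Then the index [G : G_E] is at most the number of equivalence classes of E. In particular, if a⁻¹b ∉ G_E then ¬E(a,b). -/
theorem stmt_1 {G : Type*} [Group G] (E : G → G → Prop) (hE : Equivalence E)
    (X : Set G) (hX : X = {x : G | ∃ a b : G, E a b ∧ x = a⁻¹ * b})
    (GE : Subgroup G) (hGE : GE = Subgroup.closure X) :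
    Cardinal.mk (G ⧸ GE) ≤ Cardinal.mk (Quot E) ∧
    ∀ a b : G, a⁻¹ * b ∉ GE → ¬ E a b := by
  have hmem : ∀ a b : G, E a b → a⁻¹ * b ∈ GE := by
    intro a b hab
    rw [hGE]
    exact Subgroup.subset_closure (by rw [hX]; exact ⟨a, b, hab, rfl⟩)
  constructor
  · have hsurj : Function.Surjective
        (Quot.lift (QuotientGroup.mk (s := GE)) (fun a b hab =>
          QuotientGroup.eq.mpr (hmem a b hab)) : Quot E → G ⧸ GE) := by
      intro x
      obtain ⟨g, rfl⟩ := QuotientGroup.mk_surjective x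
      exact ⟨Quot.mk E g, rfl⟩
    exact Cardinal.mk_le_of_surjective hsurj
  · intro a b h hab
    exact h (hmem a b hab)
end

section
/- Let G be a group and X ⊆ G a symmetric subset (X = X⁻¹) that is n-thick, meaning: for every sequence g_0, …, g_{n-1} of elements of G (not necessarily distinct) there exist i < j < n with g_i⁻¹g_j ∈ X. Then X is right n-generic: there exist g_0, …, g_{n-1} ∈ G with G = ⋃_{i<n} g_i·X. Likewise X is left n-generic. -/
noncomputable def thickSeq {G : Type*} [Group G] {n : ℕ} (F : (Fin n → G) → G) : ℕ → G
  | k => F fun i => if h : (i : ℕ) < k then thickSeq F i else 1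
termination_by k => k

theorem stmt_3 {G : Type*} [Group G] (X : Set G) (n : ℕ)
    (hsym : X⁻¹ = X)
    (hthick : ∀ g : Fin n → G, ∃ i j : Fin n, i < j ∧ (g i)⁻¹ * g j ∈ X) :
    (∃ g : Fin n → G, ∀ x : G, ∃ i : Fin n, (g i)⁻¹ * x ∈ X) ∧
    (∃ g : Fin n → G, ∀ x : G, ∃ i : Fin n, x * (g i)⁻¹ ∈ X) := by
  have right : ∃ g : Fin n → G, ∀ x : G, ∃ i : Fin n, (g i)⁻¹ * x ∈ X := by
    by_contra hc
    push_neg at hc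
    have hc' : ∀ g : Fin n → G, ∃ x : G, ∀ i : Fin n, (g i)⁻¹ * x ∉ X := hc
    set F : (Fin n → G) → G := fun g => (hc' g).choose with hFdef
    have hF : ∀ g (i : Fin n), (g i)⁻¹ * F g ∉ X := fun g => (hc' g).choose_spec
    set h : ℕ → G := thickSeq F with hhdef
    obtain ⟨i, j, hij, hmem⟩ := hthick (fun i => h i)
    have hj : h (j : ℕ) = F (fun i' : Fin n => if h' : (i' : ℕ) < (j : ℕ) then h i' else 1) := by
      rw [hhdef, thickSeq]
    set g' : Fin n → G := fun i' : Fin n => if h' : (i' : ℕ) < (j : ℕ) then h i' else 1 with hg'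
    have hgi : g' i = h i := by
      rw [hg']
      simp [Fin.lt_def.mp hij]
    have := hF g' i
    rw [hgi, ← hj] at this
    exact this hmem
  refine ⟨right, ?_⟩
  obtain ⟨g, hg⟩ := right
  refine ⟨fun i => (g i)⁻¹, fun x => ?_⟩
  obtain ⟨i, hi⟩ := hg x⁻¹
  refine ⟨i, ?_⟩
  rw [inv_inv, ← hsym, Set.mem_inv]
  simpa [mul_inv_rev] using hi
end

section
/- Let R be a ring containing an infinite subset S with invertible differences (for all s₁ ≠ s₂ in S, s₁ − s₂ is a unit of R). Suppose P ⊆ R is n-thick with respect to the additive group (R,+): P = −P and for any a_0,…,a_{n-1} ∈ R there exist i<j<n with a_i − a_j ∈ P. Then there exist finitely many invertible elements p_0,…,p_{k-1} ∈ P ∩ R^× such that R = ⋃_{i<k} p_i⁻¹·P. In particular R = (P ∩ R^×)⁻¹ · P. -/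
open Finset

lemma my_ramsey : ∀ (m a b : ℕ), a + b ≤ m → ∀ (c : ℕ → ℕ → Bool) (V : Finset ℕ),
    (a + b).choose a ≤ V.card →
    (∃ T : Finset ℕ, T ⊆ V ∧ T.card = a ∧ ∀ i ∈ T, ∀ j ∈ T, i < j → c i j = true) ∨
    (∃ T : Finset ℕ, T ⊆ V ∧ T.card = b ∧ ∀ i ∈ T, ∀ j ∈ T, i < j → c i j = false) := by
  intro m
  induction m with
  | zero =>
    intro a b hab c V _
    obtain rfl : a = 0 := by omega
    exact Or.inl ⟨∅, empty_subset _, card_empty, by simp⟩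
  | succ m ih =>
    intro a b hab c V hV
    match a, b with
    | 0, b => exact Or.inl ⟨∅, empty_subset _, card_empty, by simp⟩
    | a' + 1, 0 => exact Or.inr ⟨∅, empty_subset _, card_empty, by simp⟩
    | a' + 1, b' + 1 =>
      set a := a' + 1
      set b := b' + 1
      have hne : V.Nonempty := by
        rw [← card_pos]
        exact lt_of_lt_of_le (Nat.choose_pos (by omega)) hV
      set v := V.min' hne with hv
      have hvV : v ∈ V := V.min'_mem hne
      set V₁ := (V.erase v).filter (fun u => c v u = true) with hV₁
      set V₂ := (V.erase v).filter (fun u => ¬ (c v u = true)) with hV₂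
      have hsum : V₁.card + V₂.card = V.card - 1 := by
        rw [hV₁, hV₂, card_filter_add_card_filter_not, card_erase_of_mem hvV]
      have hpascal : (a + b).choose a = (a' + b).choose a' + (a + b').choose a := by
        have h1 : a + b = (a' + b' + 1) + 1 := by omega
        have h2 : a' + b = a' + b' + 1 := by omega
        have h3 : a + b' = a' + b' + 1 := by omega
        rw [h1, h2, h3, Nat.choose_succ_succ]
      by_cases hcase : (a' + b).choose a' ≤ V₁.card
      · rcases ih a' b (by omega) c V₁ hcase with ⟨T, hTs, hTc, hmono⟩ | ⟨T, hTs, hTc, hmono⟩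
        · left
          have hTV : T ⊆ V := hTs.trans ((filter_subset _ _).trans (erase_subset _ _))
          have hvT : v ∉ T := fun h => (mem_erase.mp (mem_of_mem_filter _ (hTs h))).1 rfl
          refine ⟨insert v T, ?_, ?_, ?_⟩
          · exact insert_subset hvV hTV
          · rw [card_insert_of_notMem hvT, hTc]
          · intro i hi j hj hij
            rcases mem_insert.mp hi with rfl | hiT
            · rcases mem_insert.mp hj with rfl | hjT
              · omega
              · exact (mem_filter.mp (hTs hjT)).2
            · rcases mem_insert.mp hj with rfl | hjT
              · exact absurd (V.min'_le i (hTV hiT)) (by omega)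
              · exact hmono i hiT j hjT hij
        · exact Or.inr ⟨T, hTs.trans ((filter_subset _ _).trans (erase_subset _ _)), hTc, hmono⟩
      · have hcase2 : (a + b').choose a ≤ V₂.card := by
          have := hV
          rw [hpascal] at this
          omega
        rcases ih a b' (by omega) c V₂ hcase2 with ⟨T, hTs, hTc, hmono⟩ | ⟨T, hTs, hTc, hmono⟩
        · exact Or.inl ⟨T, hTs.trans ((filter_subset _ _).trans (erase_subset _ _)), hTc, hmono⟩
        · right
          have hTV : T ⊆ V := hTs.trans ((filter_subset _ _).trans (erase_subset _ _))
          have hvT : v ∉ T := fun h => (mem_erase.mp (mem_of_mem_filter _ (hTs h))).1 rfl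
          refine ⟨insert v T, insert_subset hvV hTV, ?_, ?_⟩
          · rw [card_insert_of_notMem hvT, hTc]
          · intro i hi j hj hij
            rcases mem_insert.mp hi with rfl | hiT
            · rcases mem_insert.mp hj with rfl | hjT
              · omega
              · have := (mem_filter.mp (hTs hjT)).2
                simpa using this
            · rcases mem_insert.mp hj with rfl | hjT
              · exact absurd (V.min'_le i (hTV hiT)) (by omega)
              · exact hmono i hiT j hjT hij

theorem stmt_6 {R : Type*} [Ring R] (S : Set R) (hSinf : S.Infinite)
    (hSdiff : ∀ s₁ ∈ S, ∀ s₂ ∈ S, s₁ ≠ s₂ → IsUnit (s₁ - s₂))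
    (P : Set R) (n : ℕ) (hsym : -P = P)
    (hthick : ∀ a : Fin n → R, ∃ i j : Fin n, i < j ∧ a i - a j ∈ P) :
    (∃ (k : ℕ) (p : Fin k → R), (∀ i, p i ∈ P ∧ IsUnit (p i)) ∧
      ∀ x : R, ∃ i : Fin k, p i * x ∈ P) ∧
    (∀ x : R, ∃ p ∈ P, IsUnit p ∧ p * x ∈ P) := by
  classical
  set N := (n + n).choose n with hNdef
  have hN0 : 0 < N := Nat.choose_pos (by omega)
  obtain ⟨t, htS, htcard⟩ := hSinf.exists_subset_card_eq N
  set f : ℕ → R := fun i => if h : i < t.card then ((t.equivFin.symm ⟨i, h⟩ : t) : R) else 0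
    with hf
  have hfS : ∀ i, i < N → f i ∈ S := by
    intro i hi
    rw [hf]
    rw [← htcard] at hi
    simp only [dif_pos hi]
    exact htS (t.equivFin.symm ⟨i, hi⟩).2
  have hfinj : ∀ i, i < N → ∀ j, j < N → i ≠ j → f i ≠ f j := by
    intro i hi j hj hij
    rw [← htcard] at hi hj
    rw [hf]
    simp only [dif_pos hi, dif_pos hj]
    intro h
    have := t.equivFin.symm.injective (Subtype.coe_injective h)
    exact hij (by simpa [Fin.ext_iff] using this)
  -- key claim
  have key : ∀ x : R, ∃ u w : ℕ, u < w ∧ w < N ∧ (f u - f w) ∈ P ∧ (f u - f w) * x ∈ P := by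
    intro x
    set c : ℕ → ℕ → Bool := fun i j => decide ((f i - f j) * x ∈ P) with hc
    have hR := my_ramsey (n + n) n n le_rfl c (Finset.range N)
      (by simpa using le_of_eq hNdef)
    rcases hR with ⟨T, hTV, hTc, hmono⟩ | ⟨T, hTV, hTc, hmono⟩
    · set g := T.orderIsoOfFin hTc with hg
      obtain ⟨i, j, hij, hP⟩ := hthick (fun i => f ((g i : ℕ)))
      have hlt : (g i : ℕ) < (g j : ℕ) := g.strictMono hij
      have hjN : (g j : ℕ) < N := by
        have := hTV (g j).2
        simpa using this
      have hcueq := hmono _ (g i).2 _ (g j).2 hlt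
      rw [hc] at hcueq
      exact ⟨g i, g j, hlt, hjN, hP, of_decide_eq_true hcueq⟩
    · set g := T.orderIsoOfFin hTc with hg
      obtain ⟨i, j, hij, hP⟩ := hthick (fun i => f ((g i : ℕ)) * x)
      have hlt : (g i : ℕ) < (g j : ℕ) := g.strictMono hij
      have hcueq := hmono _ (g i).2 _ (g j).2 hlt
      rw [← sub_mul] at hP
      rw [hc] at hcueq
      simp only [decide_eq_false_iff_not] at hcueq
      exact absurd hP hcueq
  have hunit : ∀ u w : ℕ, u < w → w < N → IsUnit (f u - f w) := fun u w huw hwN =>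
    hSdiff _ (hfS u (lt_trans huw hwN)) _ (hfS w hwN) (hfinj u (lt_trans huw hwN) w hwN (by omega))
  obtain ⟨u₀, w₀, hu₀, hw₀, hp₀P, -⟩ := key 0
  set p₀ := f u₀ - f w₀ with hp₀
  have hp₀unit : IsUnit p₀ := hunit u₀ w₀ hu₀ hw₀
  constructor
  · refine ⟨N * N, fun m => if (f ((m : ℕ) / N) - f ((m : ℕ) % N)) ∈ P ∧
        IsUnit (f ((m : ℕ) / N) - f ((m : ℕ) % N)) then f ((m : ℕ) / N) - f ((m : ℕ) % N)
        else p₀, ?_, ?_⟩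
    · intro i
      dsimp only
      split
      · next h => exact h
      · exact ⟨hp₀P, hp₀unit⟩
    · intro x
      obtain ⟨u, w, huw, hwN, hP, hPx⟩ := key x
      have hm : w + N * u < N * N := by
        have : u + 1 ≤ N := by omega
        calc w + N * u < N + N * u := by omega
          _ = N * (u + 1) := by ring
          _ ≤ N * N := Nat.mul_le_mul_left N this
      refine ⟨⟨w + N * u, hm⟩, ?_⟩
      have hdiv : (w + N * u) / N = u := by
        rw [Nat.add_mul_div_left _ _ hN0, Nat.div_eq_of_lt (by omega)]; omega
      have hmod : (w + N * u) % N = w := by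
        rw [Nat.add_mul_mod_self_left, Nat.mod_eq_of_lt (by omega)]
      simp only [hdiv, hmod]
      rw [if_pos ⟨hP, hunit u w huw hwN⟩]
      exact hPx
  · intro x
    obtain ⟨u, w, huw, hwN, hP, hPx⟩ := key x
    exact ⟨f u - f w, hP, hunit u w huw hwN, hPx⟩
end

section
/- Let R be a ring with an infinite subset S having invertible differences, and suppose μ is a finitely additive, translation-invariant probability measure on all subsets of the additive group (R,+) with μ(R^×) > 0. If P ⊆ R^× is right generic in the multiplicative group of units (finitely many right translates P·f_i cover R^×), then P⁻¹·(P − P) = R, i.e. every element of R has the form p⁻¹(q − r) with p, q, r ∈ P. -/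
theorem stmt_8 {R : Type*} [Ring R] (S : Set R) (hSinf : S.Infinite)
    (hSdiff : ∀ s₁ ∈ S, ∀ s₂ ∈ S, s₁ ≠ s₂ → IsUnit (s₁ - s₂))
    (μ : Set R → ℝ)
    (hμ0 : ∀ A : Set R, 0 ≤ μ A) (hμ1 : μ Set.univ = 1)
    (hμadd : ∀ A B : Set R, Disjoint A B → μ (A ∪ B) = μ A + μ B)
    (hμinv : ∀ (a : R) (A : Set R), μ ((fun x => a + x) '' A) = μ A)
    (hμunits : 0 < μ {x : R | IsUnit x})
    (P : Set R) (hPunits : ∀ p ∈ P, IsUnit p)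
    (k : ℕ) (f : Fin k → Rˣ)
    (hgen : ∀ u : Rˣ, ∃ i : Fin k, ∃ p ∈ P, (u : R) = p * (f i : R)) :
    ∀ x : R, ∃ p ∈ P, ∃ q ∈ P, ∃ r ∈ P, p * x = q - r := by
  classical
  intro x
  obtain ⟨i0, -⟩ := hgen 1
  -- basic measure facts
  have hμempty : μ (∅ : Set R) = 0 := by
    have h := hμadd ∅ ∅ (by simp)
    simp at h
    linarith
  have hmono : ∀ A B : Set R, A ⊆ B → μ A ≤ μ B := by
    intro A B hAB
    have h := hμadd A (B \ A) Set.disjoint_sdiff_right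
    rw [Set.union_diff_cancel hAB] at h
    have := hμ0 (B \ A)
    linarith
  have hle1 : ∀ A : Set R, μ A ≤ 1 := fun A => by
    have := hmono A Set.univ (Set.subset_univ A); linarith [hμ1]
  have hpair : ∀ A B : Set R, μ (A ∪ B) ≤ μ A + μ B := by
    intro A B
    have h1 : A ∪ B = A ∪ B \ A := (Set.union_diff_self).symm
    rw [h1, hμadd A (B \ A) Set.disjoint_sdiff_right]
    have := hmono (B \ A) B Set.diff_subset
    linarith
  -- the cosets P * f i
  set Pf : Fin k → Set R := fun i => (fun p => p * (f i : R)) '' P with hPf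
  have hcover : {x : R | IsUnit x} ⊆ ⋃ i : Fin k, Pf i := by
    intro y hy
    obtain ⟨u, hu⟩ := hy
    obtain ⟨i, p, hp, he⟩ := hgen u
    exact Set.mem_iUnion.2 ⟨i, ⟨p, hp, by dsimp only; rw [← he, hu]⟩⟩
  -- subadditivity over finsets
  have hsub : ∀ s : Finset (Fin k), μ (⋃ i ∈ s, Pf i) ≤ ∑ i ∈ s, μ (Pf i) := by
    intro s
    induction s using Finset.induction_on with
    | empty => simp [hμempty]
    | insert _ _ ha ih =>
      rename_i a s
      rw [Finset.set_biUnion_insert, Finset.sum_insert ha]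
      calc μ (Pf a ∪ ⋃ i ∈ s, Pf i) ≤ μ (Pf a) + μ (⋃ i ∈ s, Pf i) := hpair _ _
        _ ≤ μ (Pf a) + ∑ i ∈ s, μ (Pf i) := by linarith
  -- choose i with positive measure coset
  have hkpos : (0 : ℝ) < k := by
    have := Fin.pos i0
    exact_mod_cast this
  have hk0 : (k : ℝ) ≠ 0 := ne_of_gt hkpos
  have hklt : ∃ i : Fin k, μ {x : R | IsUnit x} / k ≤ μ (Pf i) := by
    by_contra hcon
    push_neg at hcon
    have h1 : μ {x : R | IsUnit x} ≤ μ (⋃ i : Fin k, Pf i) := hmono _ _ hcover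
    have h2 : μ (⋃ i : Fin k, Pf i) ≤ ∑ i : Fin k, μ (Pf i) := by
      have := hsub Finset.univ
      simpa using this
    have h3 : ∑ i : Fin k, μ (Pf i) < ∑ _i : Fin k, (μ {x : R | IsUnit x} / k) := by
      have : Nonempty (Fin k) := ⟨i0⟩
      apply Finset.sum_lt_sum_of_nonempty
      · exact Finset.univ_nonempty (α := Fin k)
      · intro i _; exact hcon i
    have h4 : ∑ _i : Fin k, (μ {x : R | IsUnit x} / k) = μ {x : R | IsUnit x} := by
      rw [Finset.sum_const, Finset.card_univ, Fintype.card_fin, nsmul_eq_mul]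
      field_simp
    linarith
  obtain ⟨i, hi⟩ := hklt
  have hδpos : 0 < μ (Pf i) :=
    lt_of_lt_of_le (div_pos hμunits hkpos) hi
  -- Ramsey-type step lemma
  have step : ∀ T : Set R, T ⊆ S → T.Infinite →
      ∃ a ∈ T, ∃ m : Fin k, ∃ T' : Set R, T' ⊆ T ∧ T'.Infinite ∧
        ∀ t ∈ T', ∃ p ∈ P, t - a = p * (f m : R) := by
    intro T hTS hTinf
    obtain ⟨a, haT⟩ := hTinf.nonempty
    refine ⟨a, haT, ?_⟩
    have hcov : (T \ {a}) ⊆ ⋃ m : Fin k, {t ∈ T \ {a} | ∃ p ∈ P, t - a = p * (f m : R)} := by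
      intro t ht
      have hne : t ≠ a := by simpa using ht.2
      obtain ⟨u, hu⟩ := hSdiff t (hTS ht.1) a (hTS haT) hne
      obtain ⟨m, p, hp, he⟩ := hgen u
      exact Set.mem_iUnion.2 ⟨m, ht, p, hp, by rw [← hu, he]⟩
    have hinf : ∃ m : Fin k, {t ∈ T \ {a} | ∃ p ∈ P, t - a = p * (f m : R)}.Infinite := by
      by_contra hcon
      push_neg at hcon
      have hfin : (⋃ m : Fin k, {t ∈ T \ {a} | ∃ p ∈ P, t - a = p * (f m : R)}).Finite :=
        Set.finite_iUnion hcon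
      exact (hTinf.diff (Set.finite_singleton a)) (hfin.subset hcov)
    obtain ⟨m, hm⟩ := hinf
    refine ⟨m, _, ?_, hm, ?_⟩
    · intro t ht; exact ht.1.1
    · intro t ht; exact ht.2
  -- iterate the step with choice
  have step2 : ∀ T : Set R, ∃ (a : R) (m : Fin k) (T' : Set R),
      T ⊆ S → T.Infinite → a ∈ T ∧ T' ⊆ T ∧ T' ⊆ S ∧ T'.Infinite ∧
        ∀ t ∈ T', ∃ p ∈ P, t - a = p * (f m : R) := by
    intro T
    by_cases h : T ⊆ S ∧ T.Infinite
    · obtain ⟨a, haT, m, T', hT'T, hT'inf, hprop⟩ := step T h.1 h.2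
      exact ⟨a, m, T', fun _ _ => ⟨haT, hT'T, hT'T.trans h.1, hT'inf, hprop⟩⟩
    · exact ⟨0, i0, ∅, fun h1 h2 => absurd ⟨h1, h2⟩ h⟩
  choose A M Tn H using step2
  set chain : ℕ → Set R := fun n => Nat.rec S (fun _ T => Tn T) n with hchain
  have hchainprop : ∀ n, chain n ⊆ S ∧ (chain n).Infinite := by
    intro n
    induction n with
    | zero => exact ⟨subset_rfl, hSinf⟩
    | succ n ih =>
      have h := H (chain n) ih.1 ih.2
      exact ⟨h.2.2.1, h.2.2.2.1⟩
  have hchainstep : ∀ n, chain (n + 1) ⊆ chain n := by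
    intro n
    exact (H (chain n) (hchainprop n).1 (hchainprop n).2).2.1
  have hchainmono : ∀ j l : ℕ, j ≤ l → chain l ⊆ chain j := by
    intro j l hjl
    induction l, hjl using Nat.le_induction with
    | base => exact subset_rfl
    | succ l hjl ih => exact (hchainstep l).trans ih
  set aseq : ℕ → R := fun n => A (chain n) with haseq
  set mseq : ℕ → Fin k := fun n => M (chain n) with hmseq
  have hkey : ∀ j l : ℕ, j < l → ∃ p ∈ P, aseq l - aseq j = p * (f (mseq j) : R) := by
    intro j l hjl
    have h1 : aseq l ∈ chain l := (H (chain l) (hchainprop l).1 (hchainprop l).2).1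
    have h2 : aseq l ∈ chain (j + 1) := hchainmono (j + 1) l hjl h1
    exact (H (chain j) (hchainprop j).1 (hchainprop j).2).2.2.2.2 (aseq l) h2
  -- find an infinite fiber of mseq
  obtain ⟨m, hmfib⟩ := Finite.exists_infinite_fiber mseq
  have hJ : (mseq ⁻¹' {m}).Infinite := Set.infinite_coe_iff.1 hmfib
  set g : ℕ → ℕ := fun b => Nat.nth (fun n => n ∈ mseq ⁻¹' {m}) b with hg
  have hgmono : StrictMono g := Nat.nth_strictMono hJ
  have hgmem : ∀ b, mseq (g b) = m := fun b => Nat.nth_mem_of_infinite hJ b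
  -- the rescaled sequence with forward differences in P
  set c : ℕ → R := fun b => aseq (g b) * ((f m)⁻¹ : Rˣ) with hc
  have hcdiff : ∀ b b' : ℕ, b < b' → ∃ p ∈ P, c b' - c b = p := by
    intro b b' hbb
    obtain ⟨p, hp, he⟩ := hkey (g b) (g b') (hgmono hbb)
    rw [hgmem b] at he
    refine ⟨p, hp, ?_⟩
    rw [hc]
    simp only
    rw [← sub_mul, he, Units.mul_inv_cancel_right]
  -- translates
  set D : ℕ → Set R := fun b => (fun y => c b * x * (f i : R) + y) '' (Pf i) with hD
  have hDμ : ∀ b, μ (D b) = μ (Pf i) := fun b => hμinv _ _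
  obtain ⟨n, hn⟩ := exists_nat_gt (1 / μ (Pf i))
  have hnδ : 1 < n * μ (Pf i) := (div_lt_iff₀ hδpos).1 hn
  -- pigeonhole: two translates intersect
  have hexpair : ∃ b ∈ Finset.range n, ∃ b' ∈ Finset.range n, b ≠ b' ∧ (D b ∩ D b').Nonempty := by
    by_contra hcon
    push_neg at hcon
    have hdisj : ∀ b ∈ Finset.range n, ∀ b' ∈ Finset.range n, b ≠ b' → D b ∩ D b' = ∅ :=
      hcon
    have hsum : ∀ s : Finset ℕ, s ⊆ Finset.range n →
        ∑ b ∈ s, μ (D b) ≤ μ (⋃ b ∈ s, D b) := by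
      intro s
      induction s using Finset.induction_on with
      | empty => intro _; simp [hμempty]
      | insert _ _ ha ih =>
        rename_i a s
        intro hs
        have has : a ∈ Finset.range n := hs (Finset.mem_insert_self a s)
        have hss : s ⊆ Finset.range n := fun b hb => hs (Finset.mem_insert_of_mem hb)
        rw [Finset.set_biUnion_insert, Finset.sum_insert ha]
        have hdAB : Disjoint (D a) (⋃ b ∈ s, D b) := by
          rw [Set.disjoint_left]
          intro y hya hyu
          obtain ⟨b, hb, hyb⟩ := Set.mem_iUnion₂.1 hyu
          have hne : a ≠ b := fun h => ha (h ▸ hb)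
          have hmem : y ∈ D a ∩ D b := ⟨hya, hyb⟩
          rw [hdisj a has b (hss hb) hne] at hmem
          exact absurd hmem (Set.notMem_empty y)
        rw [hμadd _ _ hdAB]
        linarith [ih hss]
    have h1 : ∑ b ∈ Finset.range n, μ (D b) = n * μ (Pf i) := by
      rw [Finset.sum_congr rfl (fun b _ => hDμ b), Finset.sum_const, Finset.card_range,
        nsmul_eq_mul]
    have h2 := hsum (Finset.range n) (subset_rfl)
    have h3 := hle1 (⋃ b ∈ Finset.range n, D b)
    linarith
  obtain ⟨b, -, b', -, hne, y, hyb, hyb'⟩ := hexpair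
  obtain ⟨z, hz, hzy⟩ := hyb
  obtain ⟨q, hq, hqz⟩ := hz
  obtain ⟨z', hz', hzy'⟩ := hyb'
  obtain ⟨r, hr, hrz⟩ := hz'
  -- y = c b * x * f i + q * f i = c b' * x * f i + r * f i
  dsimp only at hzy hqz hzy' hrz
  rw [← hqz] at hzy
  rw [← hrz] at hzy'
  have heq : c b * x * (f i : R) + q * (f i : R) = c b' * x * (f i : R) + r * (f i : R) := by
    rw [hzy, hzy']
  have hmain : ∀ (b b' : ℕ) (q r : R), q ∈ P → r ∈ P → b' < b →
      c b * x * (f i : R) + q * (f i : R) = c b' * x * (f i : R) + r * (f i : R) →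
      ∃ p ∈ P, ∃ q' ∈ P, ∃ r' ∈ P, p * x = q' - r' := by
    intro b b' q r hq hr hlt he
    obtain ⟨p, hp, hpe⟩ := hcdiff b' b hlt
    have h1 : (c b - c b') * x * (f i : R) = (r - q) * (f i : R) := by
      have e : c b * x * (f i : R) - c b' * x * (f i : R)
          = r * (f i : R) - q * (f i : R) := by
        rw [sub_eq_sub_iff_add_eq_add, he, add_comm]
      calc (c b - c b') * x * (f i : R)
          = (c b * x - c b' * x) * (f i : R) := by rw [sub_mul]
        _ = c b * x * (f i : R) - c b' * x * (f i : R) := by rw [sub_mul]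
        _ = r * (f i : R) - q * (f i : R) := e
        _ = (r - q) * (f i : R) := (sub_mul r q _).symm
    have h2 : (c b - c b') * x = r - q := by
      have h3 := congrArg (fun w : R => w * (((f i)⁻¹ : Rˣ) : R)) h1
      simpa [Units.mul_inv_cancel_right] using h3
    rw [hpe] at h2
    exact ⟨p, hp, r, hr, q, hq, h2⟩
  rcases hne.lt_or_gt with hlt | hlt
  · exact hmain b' b r q hr hq hlt heq.symm
  · exact hmain b b' q r hq hr hlt heq
end
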